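/- Let Δ be a set of transition formulas over states Q whose quantifier rank is bounded: let K be the maximum number k of existential quantifiers appearing in any formula in Δ. If two finite sequences S₁,…,S_n and S'₁,…,S'_{n'} of subsets of Q realize the same (K+1)-bounded counting configuration, then for every transition formula θ ∈ Δ, the structure struct(S₁,…,S_n) satisfies θ if and only if struct(S'₁,…,S'_{n'}) satisfies θ. -/

import Mathlib

/-- A transition formula over a state set `Q`, i.e. the data of the first-order sentence
`∃x₁⋯∃x_k (diff(x₁,…,x_k) ∧ q₁(x₁) ∧ ⋯ ∧ q_k(x_k) ∧ ∀z (diff(z,x₁,…,x_k) → ψ))`,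
where `ψ` is a disjunction of conjunctions of atoms `q(z)` (given as a list of lists). -/
structure TransFormula (Q : Type) where
  k : ℕ
  req : Fin k → Q
  dnf : List (List Q)

/-- Satisfaction of a transition formula in the structure `struct(S₁,…,S_n)` determined by a
list of subsets of `Q`: the universe is the index set, and each unary predicate `q` holds at
index `i` iff `q ∈ Sᵢ`. -/
def TransFormula.satL {Q : Type} (θ : TransFormula Q) (L : List (Set Q)) : Prop :=
  ∃ x : Fin θ.k → Fin L.length, Function.Injective x ∧
    (∀ i : Fin θ.k, θ.req i ∈ L.get (x i)) ∧
    ∀ z : Fin L.length, z ∉ Set.range x → ∃ C ∈ θ.dnf, ∀ q ∈ C, q ∈ L.get z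

/-- The number of occurrences of the subset `S` in the list `L`. -/
noncomputable def mcount {Q : Type} (S : Set Q) (L : List (Set Q)) : ℕ :=
  L.countP fun T => @decide (T = S) (Classical.propDecidable _)

/-- A list of subsets of `Q` realizes the `(K+1)`-bounded counting configuration `c`:
for each subset `S`, either `c S ≤ K` and exactly `c S` entries equal `S`, or
`c S = K + 1` and more than `K` entries equal `S`. -/
def Realizes {Q : Type} (K : ℕ) (c : Set Q → ℕ) (L : List (Set Q)) : Prop :=
  ∀ S : Set Q, (c S ≤ K ∧ mcount S L = c S) ∨ (c S = K + 1 ∧ K < mcount S L)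

open Classical

lemma mcount_eq_card {Q : Type} (S : Set Q) (L : List (Set Q)) :
    mcount S L = (Finset.univ.filter (fun j : Fin L.length => L.get j = S)).card := by
  classical
  rw [mcount]
  conv_lhs => rw [← List.map_get_finRange L]
  rw [List.countP_map, Finset.card, Finset.filter_val, Fin.univ_def]
  simp only [Multiset.filter_coe, Multiset.coe_card, List.countP_eq_length_filter]
  congr 1

lemma count_transfer {Q : Type} {K : ℕ} {c : Set Q → ℕ} {L L' : List (Set Q)}
    (hL : Realizes K c L) (hL' : Realizes K c L') (S : Set Q) (m : ℕ)
    (hm : m ≤ K + 1) (h : m ≤ mcount S L) : m ≤ mcount S L' := by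
  rcases hL S with ⟨h1, h2⟩ | ⟨h1, h2⟩ <;> rcases hL' S with ⟨h1', h2'⟩ | ⟨h1', h2'⟩ <;> omega

noncomputable def rnk {k : ℕ} {α : Type*} (g : Fin k → α) (i : Fin k) : ℕ :=
  (Finset.univ.filter (fun i' : Fin k => i' < i ∧ g i' = g i)).card

lemma rnk_lt {k : ℕ} {α : Type*} (g : Fin k → α) (i : Fin k) :
    rnk g i < (Finset.univ.filter (fun i' : Fin k => g i' = g i)).card := by
  classical
  apply Finset.card_lt_card
  constructor
  · intro a ha
    simp only [Finset.mem_filter, Finset.mem_univ, true_and] at ha ⊢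
    exact ha.2
  · intro hsub
    have h1 : i ∈ Finset.univ.filter (fun i' : Fin k => g i' = g i) := by simp
    have := hsub h1
    simp at this

lemma rnk_strictMono {k : ℕ} {α : Type*} (g : Fin k → α) {i j : Fin k}
    (hij : i < j) (hg : g i = g j) : rnk g i < rnk g j := by
  classical
  apply Finset.card_lt_card
  constructor
  · intro a ha
    simp only [Finset.mem_filter, Finset.mem_univ, true_and] at ha ⊢
    exact ⟨ha.1.trans hij, ha.2.trans hg⟩
  · intro hsub
    have h1 : i ∈ Finset.univ.filter (fun i' : Fin k => i' < j ∧ g i' = g j) := by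
      simp [hij, hg]
    have := hsub h1
    simp at this

lemma rnk_inj {k : ℕ} {α : Type*} (g : Fin k → α) {i j : Fin k}
    (hg : g i = g j) (hr : rnk g i = rnk g j) : i = j := by
  rcases lt_trichotomy i j with h | h | h
  · exact absurd hr (rnk_strictMono g h hg).ne
  · exact h
  · exact absurd hr.symm (rnk_strictMono g h hg.symm).ne

noncomputable def ee {Q : Type} (L' : List (Set Q)) (S : Set Q) (r : ℕ)
    (h : r < (Finset.univ.filter (fun j : Fin L'.length => L'.get j = S)).card) :
    Fin L'.length :=
  (Finset.univ.filter (fun j : Fin L'.length => L'.get j = S)).orderEmbOfFin rfl ⟨r, h⟩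

lemma ee_mem {Q : Type} (L' : List (Set Q)) (S : Set Q) (r : ℕ) (h) :
    L'.get (ee L' S r h) = S := by
  have := Finset.orderEmbOfFin_mem
    (Finset.univ.filter (fun j : Fin L'.length => L'.get j = S)) rfl ⟨r, h⟩
  rw [Finset.mem_filter] at this
  exact this.2

lemma ee_congr {Q : Type} (L' : List (Set Q)) {S S' : Set Q} (hSS : S = S') (r : ℕ) (h h') :
    ee L' S r h = ee L' S' r h' := by subst hSS; rfl

lemma ee_inj {Q : Type} (L' : List (Set Q)) (S : Set Q) {r r' : ℕ} {h h'}
    (he : ee L' S r h = ee L' S r' h') : r = r' := by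
  have := (Finset.orderEmbOfFin
    (Finset.univ.filter (fun j : Fin L'.length => L'.get j = S)) rfl).injective he
  simpa using congrArg Fin.val this

lemma exists_matching {Q : Type} {k : ℕ} (g : Fin k → Set Q) (L' : List (Set Q))
    (h : ∀ S, (Finset.univ.filter (fun i : Fin k => g i = S)).card ≤
      (Finset.univ.filter (fun j : Fin L'.length => L'.get j = S)).card) :
    ∃ x' : Fin k → Fin L'.length, Function.Injective x' ∧ ∀ i, L'.get (x' i) = g i := by
  have hlt : ∀ i, rnk g i < (Finset.univ.filter
      (fun j : Fin L'.length => L'.get j = g i)).card :=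
    fun i => lt_of_lt_of_le (rnk_lt g i) (h (g i))
  refine ⟨fun i => ee L' (g i) (rnk g i) (hlt i), ?_, fun i => ee_mem L' (g i) (rnk g i) (hlt i)⟩
  intro i j hx
  simp only at hx
  have hS : g i = g j := by
    rw [← ee_mem L' (g i) (rnk g i) (hlt i), ← ee_mem L' (g j) (rnk g j) (hlt j), hx]
  have h'' : rnk g j < (Finset.univ.filter
      (fun j' : Fin L'.length => L'.get j' = g i)).card := by rw [hS]; exact hlt j
  have hx2 : ee L' (g i) (rnk g i) (hlt i) = ee L' (g i) (rnk g j) h'' :=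
    hx.trans (ee_congr L' hS.symm _ _ _)
  exact rnk_inj g hS (ee_inj L' (g i) hx2)

lemma satL_transfer {Q : Type} {K : ℕ} {c : Set Q → ℕ} {L L' : List (Set Q)}
    (hL : Realizes K c L) (hL' : Realizes K c L') (θ : TransFormula Q) (hk : θ.k ≤ K)
    (h : θ.satL L) : θ.satL L' := by
  classical
  obtain ⟨x, hxinj, hreq, hout⟩ := h
  set g : Fin θ.k → Set Q := fun i => L.get (x i) with hg
  -- count of each fiber of g is at most the count in L
  have hfib : ∀ S : Set Q, (Finset.univ.filter (fun i : Fin θ.k => g i = S)).card ≤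
      mcount S L := by
    intro S
    rw [mcount_eq_card]
    apply Finset.card_le_card_of_injOn x
    · intro i hi
      simp only [Finset.mem_coe, Finset.mem_filter, Finset.mem_univ, true_and] at hi ⊢
      exact hi
    · exact hxinj.injOn
  have hfibk : ∀ S : Set Q, (Finset.univ.filter (fun i : Fin θ.k => g i = S)).card ≤ θ.k := by
    intro S
    calc (Finset.univ.filter (fun i : Fin θ.k => g i = S)).card
        ≤ (Finset.univ : Finset (Fin θ.k)).card := Finset.card_filter_le _ _
      _ = θ.k := by simp
  have hfib' : ∀ S : Set Q, (Finset.univ.filter (fun i : Fin θ.k => g i = S)).card ≤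
      (Finset.univ.filter (fun j : Fin L'.length => L'.get j = S)).card := by
    intro S
    rw [← mcount_eq_card]
    exact count_transfer hL hL' S _ (by have := hfibk S; omega) (hfib S)
  obtain ⟨x', hx'inj, hx'get⟩ := exists_matching g L' hfib'
  refine ⟨x', hx'inj, fun i => ?_, fun z hz => ?_⟩
  · rw [hx'get i]; exact hreq i
  · set S := L'.get z with hS
    -- count of S in L' is at least fiber + 1
    have hzcnt : (Finset.univ.filter (fun i : Fin θ.k => g i = S)).card + 1 ≤ mcount S L' := by
      rw [mcount_eq_card]
      have hsub : insert z ((Finset.univ.filter (fun i : Fin θ.k => g i = S)).image x') ⊆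
          Finset.univ.filter (fun j : Fin L'.length => L'.get j = S) := by
        intro w hw
        simp only [Finset.mem_insert, Finset.mem_image, Finset.mem_filter, Finset.mem_univ,
          true_and] at hw ⊢
        rcases hw with rfl | ⟨i, hi, rfl⟩
        · rfl
        · rw [hx'get i, hi]
      have hznot : z ∉ (Finset.univ.filter (fun i : Fin θ.k => g i = S)).image x' := by
        intro hmem
        rcases Finset.mem_image.1 hmem with ⟨i, _, hi⟩
        exact hz ⟨i, hi⟩
      calc (Finset.univ.filter (fun i : Fin θ.k => g i = S)).card + 1
          = ((Finset.univ.filter (fun i : Fin θ.k => g i = S)).image x').card + 1 := by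
            rw [Finset.card_image_of_injective _ hx'inj]
        _ = (insert z ((Finset.univ.filter (fun i : Fin θ.k => g i = S)).image x')).card := by
            rw [Finset.card_insert_of_notMem hznot]
        _ ≤ _ := Finset.card_le_card hsub
    have hLcnt : (Finset.univ.filter (fun i : Fin θ.k => g i = S)).card + 1 ≤ mcount S L :=
      count_transfer hL' hL S _ (by have := hfibk S; omega) hzcnt
    -- pigeonhole: there is w outside range x with L.get w = S
    have hpig : ∃ w : Fin L.length, w ∉ Set.range x ∧ L.get w = S := by
      rw [mcount_eq_card] at hLcnt
      have hsub2 : (Finset.univ.filter (fun i : Fin θ.k => g i = S)).image x ⊆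
          Finset.univ.filter (fun j : Fin L.length => L.get j = S) := by
        intro w hw
        simp only [Finset.mem_image, Finset.mem_filter, Finset.mem_univ, true_and] at hw ⊢
        rcases hw with ⟨i, hi, rfl⟩
        exact hi
      have hlt2 : ((Finset.univ.filter (fun i : Fin θ.k => g i = S)).image x).card <
          (Finset.univ.filter (fun j : Fin L.length => L.get j = S)).card := by
        rw [Finset.card_image_of_injective _ hxinj]; omega
      have hss : (Finset.univ.filter (fun i : Fin θ.k => g i = S)).image x ⊂
          Finset.univ.filter (fun j : Fin L.length => L.get j = S) :=
        Finset.ssubset_iff_subset_ne.2 ⟨hsub2, by intro hEq; rw [hEq] at hlt2; omega⟩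
      obtain ⟨w, hw1, hw2⟩ := Finset.exists_of_ssubset hss
      simp only [Finset.mem_filter, Finset.mem_univ, true_and] at hw1
      refine ⟨w, ?_, hw1⟩
      rintro ⟨i, rfl⟩
      apply hw2
      simp only [Finset.mem_image, Finset.mem_filter, Finset.mem_univ, true_and]
      exact ⟨i, by rw [← hw1], rfl⟩
    obtain ⟨w, hw1, hw2⟩ := hpig
    obtain ⟨C, hC1, hC2⟩ := hout w hw1
    refine ⟨C, hC1, fun q hq => ?_⟩
    have := hC2 q hq
    rw [hw2] at this
    exact this

/-- Let `Δ` be a set of transition formulas over `Q` whose number of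
existential quantifiers is bounded by `K`. If two finite sequences of subsets of `Q` realize
the same `(K+1)`-bounded counting configuration, then every transition formula of `Δ` is
satisfied in the structure determined by the first sequence iff it is satisfied in the
structure determined by the second. -/
theorem transition_formulas_depend_only_on_counting_configuration
    {Q : Type} (Δ : Set (TransFormula Q)) (K : ℕ) (hK : ∀ θ ∈ Δ, θ.k ≤ K)
    (L L' : List (Set Q)) (c : Set Q → ℕ)
    (hL : Realizes K c L) (hL' : Realizes K c L') :
    ∀ θ ∈ Δ, (θ.satL L ↔ θ.satL L') := by
  intro θ hθ
  exact ⟨satL_transfer hL hL' θ (hK θ hθ), satL_transfer hL' hL θ (hK θ hθ)⟩
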